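/- If Y₁, …, Yₙ are i.i.d. random variables with common distribution Q on a finite alphabet 𝒳, then for every ε > 0, the probability that the KL divergence of the empirical distribution from Q is at least ε satisfies P( D(Q̂_{Yⁿ}‖Q) ≥ ε ) ≤ (n+1)^{|𝒳|} e^{−nε}. -/

import Mathlib

open MeasureTheory Filter Finset Set Topology
open scoped ENNReal NNReal ENat

namespace AHT

noncomputable section

variable {X : Type*}

/-- A probability distribution on a finite alphabet. -/
def IsDist [Fintype X] (P : X → ℝ) : Prop :=
  (∀ x, 0 ≤ P x) ∧ ∑ x, P x = 1

/-- Kullback–Leibler divergence. -/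
def KL [Fintype X] (P Q : X → ℝ) : ℝ :=
  ∑ a, P a * Real.log (P a / Q a)

/-- Bhattacharyya distance. -/
def Bhat [Fintype X] (Q0 Q1 : X → ℝ) : ℝ :=
  -Real.log (∑ x, (Q0 x) ^ ((1 : ℝ) / 2) * (Q1 x) ^ ((1 : ℝ) / 2))

/-- Empirical distribution (type) of the first `n` samples. -/
def emp [Fintype X] [DecidableEq X] (n : ℕ) (ω : ℕ → X) (a : X) : ℝ :=
  (((Finset.range n).filter fun k => ω k = a).card : ℝ) / n

/-- Row-stochastic matrix (adversary channel). -/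
def RowStoch [Fintype X] (A : X → X → ℝ) : Prop :=
  (∀ x y, 0 ≤ A x y) ∧ ∀ x, ∑ y, A x y = 1

/-- Output distribution of channel `A` when the input distribution is `P`. -/
def push [Fintype X] (P : X → ℝ) (A : X → X → ℝ) (y : X) : ℝ :=
  ∑ x, P x * A x y

/-- `μ` is the law of an i.i.d. sequence with one-dimensional marginal `Q`. -/
def IsIID [Fintype X] [MeasurableSpace X] (μ : Measure (ℕ → X)) (Q : X → ℝ) : Prop :=
  IsProbabilityMeasure μ ∧
    ∀ (n : ℕ) (v : Fin n → X),
      μ {ω | ∀ k : Fin n, ω (k : ℕ) = v k} = ENNReal.ofReal (∏ k, Q (v k))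

/-- Admissible adversary channels for hypothesis distribution `Pi`. -/
def Adm [Fintype X] (d : (X → ℝ) → (X → ℝ) → ℝ) (Δ : ℝ) (Pi : X → ℝ) :
    Set (X → X → ℝ) :=
  {A | RowStoch A ∧ d Pi (push Pi A) ≤ Δ ∧ ∀ y, 0 < push Pi A y}

/-- The constant `C = Σ_{n ≥ 1} e^{-n^{1-ζ}}` with `ζ = 0.85`. -/
def Cζ : ℝ := ∑' n : ℕ, Real.exp (-((n : ℝ) + 1) ^ (0.15 : ℝ))

/-- The thresholds `γ_n` (with `K = |𝒳|`). -/
def gammaTh (K M : ℕ) (α : ℝ) (n : ℕ) : ℝ :=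
  Real.log (Cζ / α) / n + 1 / (n : ℝ) ^ (0.85 : ℝ) +
    ((K : ℝ) * Real.log ((n : ℝ) + 1) + Real.log ((M : ℝ) - 1)) / n

/-- The statistic `Z_i^{(n)}`. -/
def Zstat [Fintype X] [DecidableEq X] {M : ℕ} (P : Fin M → X → ℝ)
    (d : (X → ℝ) → (X → ℝ) → ℝ) (Δ : ℝ) (i : Fin M) (n : ℕ) (ω : ℕ → X) : ℝ :=
  sInf {r | ∃ j, j ≠ i ∧ ∃ A ∈ Adm d Δ (P j), r = KL (emp n ω) (push (P j) A)}

/-- The one-sided stopping times `T_i`. -/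
def Ti [Fintype X] [DecidableEq X] {M : ℕ} (P : Fin M → X → ℝ)
    (d : (X → ℝ) → (X → ℝ) → ℝ) (Δ α : ℝ) (i : Fin M) (ω : ℕ → X) : ℕ∞ :=
  sInf {t : ℕ∞ | ∃ n : ℕ, t = (n : ℕ∞) ∧ 1 ≤ n ∧
    gammaTh (Fintype.card X) M α n ≤ Zstat P d Δ i n ω}

/-- The stopping time `T*`. -/
def Tstar [Fintype X] [DecidableEq X] {M : ℕ} (P : Fin M → X → ℝ)
    (d : (X → ℝ) → (X → ℝ) → ℝ) (Δ α : ℝ) (ω : ℕ → X) : ℕ∞ :=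
  ⨅ i, Ti P d Δ α i ω

/-- Expected value of an `ℕ∞`-valued stopping time. -/
def ExpT [MeasurableSpace X] (μ : Measure (ℕ → X)) (T : (ℕ → X) → ℕ∞) : ℝ :=
  (∫⁻ ω, ((T ω : ℕ∞) : ℝ≥0∞) ∂μ).toReal

/-- Thresholds in the binary non-aware setting. -/
def gammaNA (K : ℕ) (α : ℝ) (n : ℕ) : ℝ :=
  Real.log (Cζ / α) / n + 1 / (n : ℝ) ^ (0.85 : ℝ) + (K : ℝ) * Real.log ((n : ℝ) + 1) / n

/-- Admissible common channels in the non-aware setting. -/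
def AdmNA [Fintype X] (d : (X → ℝ) → (X → ℝ) → ℝ) (Δ : ℝ) (P0 P1 : X → ℝ) :
    Set (X → X → ℝ) :=
  {A | RowStoch A ∧ max (d P0 (push P0 A)) (d P1 (push P1 A)) ≤ Δ ∧
    (∀ y, 0 < push P0 A y) ∧ ∀ y, 0 < push P1 A y}

/-- The statistic `S_n` in the non-aware setting. -/
def Sstat [Fintype X] [DecidableEq X] (P0 P1 : X → ℝ)
    (d : (X → ℝ) → (X → ℝ) → ℝ) (Δ : ℝ) (n : ℕ) (ω : ℕ → X) : ℝ :=
  sInf {r | ∃ A ∈ AdmNA d Δ P0 P1,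
    r = max (KL (emp n ω) (push P0 A)) (KL (emp n ω) (push P1 A))}

/-- Stopping time `τ*` of the non-aware test. -/
def tauNA [Fintype X] [DecidableEq X] (P0 P1 : X → ℝ)
    (d : (X → ℝ) → (X → ℝ) → ℝ) (Δ α : ℝ) (ω : ℕ → X) : ℕ∞ :=
  sInf {t : ℕ∞ | ∃ n : ℕ, t = (n : ℕ∞) ∧ 1 ≤ n ∧
    gammaNA (Fintype.card X) α n ≤ Sstat P0 P1 d Δ n ω}

/-- A sequential test: a stopping time together with an `F_T`-measurable decision,
expressed functionally (the stopping decision and the final decision depend only on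
the samples observed up to the stopping time). -/
structure SeqTest (X : Type*) (M : ℕ) where
  T : (ℕ → X) → ℕ∞
  dec : (ℕ → X) → Fin M
  adapted : ∀ ω ω' : ℕ → X, ∀ n : ℕ, T ω = (n : ℕ∞) →
    (∀ k < n, ω k = ω' k) → T ω' = (n : ℕ∞) ∧ dec ω' = dec ω

/-- Membership in the decision maker's strategy set `𝒮_D(α)`: all error
probabilities are at most `α` whatever admissible strategy the adversary uses,
and the expected stopping times are finite. -/
def InSD [Fintype X] [MeasurableSpace X] {M : ℕ} (P : Fin M → X → ℝ)
    (d : (X → ℝ) → (X → ℝ) → ℝ) (Δ α : ℝ) (Φ : SeqTest X M) : Prop :=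
  ∀ B : Fin M → X → X → ℝ, (∀ i, B i ∈ Adm d Δ (P i)) →
    ∀ ν : Fin M → Measure (ℕ → X), (∀ i, IsIID (ν i) (push (P i) (B i))) →
      ∀ i, ν i {ω | Φ.dec ω ≠ i} ≤ ENNReal.ofReal α ∧
        ∫⁻ ω, ((Φ.T ω : ℕ∞) : ℝ≥0∞) ∂(ν i) < ⊤


/-- Concentration of the empirical distribution (Lemma from Cover--Thomas):
if Y_1,...,Y_n are i.i.d. with distribution Q on a finite alphabet, then
P(D(\hat Q_{Y^n} || Q) >= eps) <= (n+1)^{|X|} e^{-n eps}. -/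
private lemma prod_eq_prod_pow {X : Type*} [Fintype X] [DecidableEq X] {n : ℕ}
    (v : Fin n → X) (f : X → ℝ) :
    ∏ k, f (v k) = ∏ a, f a ^ (Finset.univ.filter fun k => v k = a).card := by
  rw [← Finset.prod_fiberwise_of_maps_to (g := v) (fun k _ => Finset.mem_univ (v k))
      (fun k => f (v k))]
  refine Finset.prod_congr rfl fun a _ => ?_
  rw [← Finset.prod_const]
  exact Finset.prod_congr rfl fun k hk => by rw [(Finset.mem_filter.1 hk).2]

private lemma sum_typ {X : Type*} [Fintype X] [DecidableEq X] {n : ℕ} (v : Fin n → X) :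
    ∑ a, (Finset.univ.filter fun k => v k = a).card = n := by
  have := Finset.card_eq_sum_card_fiberwise (s := (Finset.univ : Finset (Fin n)))
    (t := (Finset.univ : Finset X)) (f := v) (fun k _ => Finset.mem_univ (v k))
  simpa using this.symm

private lemma pow_eq_pow_mul_exp {P Q : ℝ} (hP : 0 < P) (hQ : 0 < Q) (c : ℕ) :
    Q ^ c = P ^ c * Real.exp (-((c : ℝ) * Real.log (P / Q))) := by
  have h1 : Real.exp (-((c : ℝ) * Real.log (P / Q))) = (Q / P) ^ c := by
    rw [← mul_neg, ← Real.log_inv, inv_div, Real.exp_nat_mul,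
      Real.exp_log (div_pos hQ hP)]
  rw [h1, ← mul_pow]
  congr 1
  field_simp

private lemma key_ineq {X : Type*} [Fintype X] [DecidableEq X]
    (Q : X → ℝ) (hQ0 : ∀ x, 0 ≤ Q x) {n : ℕ} (hn : 0 < n) (v : Fin n → X) {ε : ℝ}
    (hKL : ε ≤ KL (fun a => ((Finset.univ.filter fun k => v k = a).card : ℝ) / n) Q) :
    ∏ k, Q (v k) ≤ Real.exp (-((n : ℝ) * ε)) *
      ∏ k, ((Finset.univ.filter fun k' => v k' = v k).card : ℝ) / n := by
  classical
  set c : X → ℕ := fun a => (Finset.univ.filter fun k => v k = a).card with hc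
  set P : X → ℝ := fun a => (c a : ℝ) / n with hPdef
  have hnR : (0 : ℝ) < n := by exact_mod_cast hn
  have hPnn : ∀ a, 0 ≤ P a := fun a => div_nonneg (Nat.cast_nonneg _) hnR.le
  have hRHSfac : (0 : ℝ) ≤ ∏ k, P (v k) :=
    Finset.prod_nonneg fun k _ => hPnn (v k)
  have hQprod : ∏ k, Q (v k) = ∏ a, Q a ^ c a := prod_eq_prod_pow v Q
  have hPprod : ∏ k, P (v k) = ∏ a, P a ^ c a := prod_eq_prod_pow v P
  by_cases hz : ∃ a, c a ≠ 0 ∧ Q a = 0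
  · obtain ⟨a, hca, hQa⟩ := hz
    have hzero : ∏ k, Q (v k) = 0 := by
      rw [hQprod]
      exact Finset.prod_eq_zero (Finset.mem_univ a) (by rw [hQa]; exact zero_pow hca)
    rw [hzero]
    exact mul_nonneg (Real.exp_nonneg _) hRHSfac
  · push_neg at hz
    have hQpos : ∀ a, c a ≠ 0 → 0 < Q a := fun a ha =>
      lt_of_le_of_ne (hQ0 a) (Ne.symm (hz a ha))
    have hPpos : ∀ a, c a ≠ 0 → 0 < P a := fun a ha =>
      div_pos (by exact_mod_cast Nat.pos_of_ne_zero ha) hnR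
    set A : Finset X := Finset.univ.filter fun a => c a ≠ 0 with hA
    have hsub : ∀ (f : X → ℝ), (∀ a, c a = 0 → f a = 1) →
        ∏ a ∈ A, f a = ∏ a, f a := by
      intro f hf
      refine Finset.prod_subset (Finset.filter_subset _ _) fun a _ ha => ?_
      refine hf a ?_
      by_contra h
      exact ha (Finset.mem_filter.2 ⟨Finset.mem_univ a, h⟩)
    have hQA : ∏ a, Q a ^ c a = ∏ a ∈ A, Q a ^ c a :=
      (hsub _ fun a h => by rw [h, pow_zero]).symm
    have hPA : ∏ a, P a ^ c a = ∏ a ∈ A, P a ^ c a :=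
      (hsub _ fun a h => by rw [h, pow_zero]).symm
    have hstep : ∏ a ∈ A, Q a ^ c a
        = (∏ a ∈ A, P a ^ c a) *
          Real.exp (∑ a ∈ A, -((c a : ℝ) * Real.log (P a / Q a))) := by
      rw [Real.exp_sum, ← Finset.prod_mul_distrib]
      exact Finset.prod_congr rfl fun a ha =>
        pow_eq_pow_mul_exp (hPpos a (Finset.mem_filter.1 ha).2)
          (hQpos a (Finset.mem_filter.1 ha).2) (c a)
    have hsum : ∑ a ∈ A, -((c a : ℝ) * Real.log (P a / Q a))
        = -((n : ℝ) * KL P Q) := by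
      rw [Finset.sum_neg_distrib]
      congr 1
      have h1 : ∑ a ∈ A, (c a : ℝ) * Real.log (P a / Q a)
          = ∑ a, (c a : ℝ) * Real.log (P a / Q a) := by
        refine Finset.sum_subset (Finset.filter_subset _ _) fun a _ ha => ?_
        have : c a = 0 := by
          by_contra h
          exact ha (Finset.mem_filter.2 ⟨Finset.mem_univ a, h⟩)
        rw [this]
        simp
      rw [h1, KL, Finset.mul_sum]
      refine Finset.sum_congr rfl fun a _ => ?_
      rw [hPdef]
      field_simp
    rw [hQprod, hQA, hstep, hsum, hPprod, hPA]
    rw [mul_comm]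
    refine mul_le_mul_of_nonneg_right (Real.exp_le_exp.2 ?_) (by rw [← hPA, ← hPprod]; exact hRHSfac)
    exact neg_le_neg (mul_le_mul_of_nonneg_left hKL hnR.le)

set_option maxHeartbeats 1000000 in
private lemma sum_S_le {X : Type*} [Fintype X] [DecidableEq X]
    (Q : X → ℝ) (hQ0 : ∀ x, 0 ≤ Q x) {n : ℕ} (hn : 0 < n) {ε : ℝ}
    (S : Finset (Fin n → X))
    (hS : ∀ v ∈ S, ε ≤ KL (fun a => ((Finset.univ.filter fun k => v k = a).card : ℝ) / n) Q) :
    ∑ v ∈ S, ∏ k, Q (v k) ≤ ((n : ℝ) + 1) ^ (Fintype.card X) * Real.exp (-((n : ℝ) * ε)) := by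
  classical
  set typ : (Fin n → X) → (X → ℕ) := fun v a => (Finset.univ.filter fun k => v k = a).card
    with htyp
  have hnR : (0 : ℝ) < n := by exact_mod_cast hn
  have step1 : ∑ v ∈ S, ∏ k, Q (v k) ≤
      Real.exp (-((n : ℝ) * ε)) * ∑ v ∈ S, ∏ k, ((typ v (v k) : ℝ) / n) := by
    rw [Finset.mul_sum]
    exact Finset.sum_le_sum fun v hv => key_ineq Q hQ0 hn v (hS v hv)
  set T : Finset (X → ℕ) := S.image typ with hT
  have step2 : ∑ v ∈ S, ∏ k, ((typ v (v k) : ℝ) / n) ≤ (T.card : ℝ) := by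
    rw [← Finset.sum_fiberwise_of_maps_to (g := typ)
      (fun v hv => Finset.mem_image_of_mem typ hv)
      (fun v => ∏ k, ((typ v (v k) : ℝ) / n))]
    rw [show ((T.card : ℝ)) = ∑ _θ ∈ T, (1 : ℝ) by simp]
    refine Finset.sum_le_sum fun θ hθ => ?_
    obtain ⟨w, hwS, hwθ⟩ := Finset.mem_image.1 hθ
    have hsum1 : ∑ x, (θ x : ℝ) / n = 1 := by
      rw [← Finset.sum_div, ← Nat.cast_sum]
      rw [← hwθ]
      rw [htyp]
      simp only
      rw [sum_typ w]
      field_simp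
    have inner : ∀ v ∈ S.filter (fun v => typ v = θ),
        ∏ k, ((typ v (v k) : ℝ) / n) = ∏ k, ((θ (v k) : ℝ) / n) := by
      intro v hv
      rw [(Finset.mem_filter.1 hv).2]
    rw [Finset.sum_congr rfl inner]
    calc ∑ v ∈ S.filter (fun v => typ v = θ), ∏ k, ((θ (v k) : ℝ) / n)
        ≤ ∑ v : Fin n → X, ∏ k, ((θ (v k) : ℝ) / n) :=
          Finset.sum_le_sum_of_subset_of_nonneg (Finset.filter_subset _ _ |>.trans
            (Finset.subset_univ S)) (fun v _ _ =>
            Finset.prod_nonneg fun k _ => div_nonneg (Nat.cast_nonneg _) hnR.le)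
      _ = (∑ x, (θ x : ℝ) / n) ^ n := (Fintype.sum_pow (fun x => (θ x : ℝ) / n) n).symm
      _ = 1 := by rw [hsum1, one_pow]
  have step3 : (T.card : ℝ) ≤ ((n : ℝ) + 1) ^ (Fintype.card X) := by
    have hbound : ∀ θ ∈ T, ∀ a, θ a < n + 1 := by
      intro θ hθ a
      obtain ⟨w, _, hwθ⟩ := Finset.mem_image.1 hθ
      have : typ w a ≤ n := by
        calc typ w a ≤ (Finset.univ : Finset (Fin n)).card := Finset.card_filter_le _ _
          _ = n := Finset.card_univ.trans (Fintype.card_fin n)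
      rw [← hwθ]; omega
    have hcard : T.card ≤ (n + 1) ^ (Fintype.card X) := by
      have hinj : Set.InjOn (fun (θ : X → ℕ) (a : X) => (⟨min (θ a) n, by omega⟩ : Fin (n + 1)))
          ↑T := by
        intro θ hθ θ' hθ' h
        funext a
        have h1 : θ a < n + 1 := hbound θ hθ a
        have h2 : θ' a < n + 1 := hbound θ' hθ' a
        have := congrFun h a
        simp only [Fin.mk.injEq] at this
        omega
      calc T.card ≤ (Finset.univ : Finset (X → Fin (n + 1))).card :=
            Finset.card_le_card_of_injOn _ (fun _ _ => Finset.mem_univ _) hinj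
        _ = (n + 1) ^ (Fintype.card X) := by
            rw [Finset.card_univ, Fintype.card_fun, Fintype.card_fin]
    calc (T.card : ℝ) ≤ (((n + 1) ^ (Fintype.card X) : ℕ) : ℝ) := by exact_mod_cast hcard
      _ = ((n : ℝ) + 1) ^ (Fintype.card X) := by push_cast; ring
  calc ∑ v ∈ S, ∏ k, Q (v k)
      ≤ Real.exp (-((n : ℝ) * ε)) * ∑ v ∈ S, ∏ k, ((typ v (v k) : ℝ) / n) := step1
    _ ≤ Real.exp (-((n : ℝ) * ε)) * (T.card : ℝ) := by
        exact mul_le_mul_of_nonneg_left step2 (Real.exp_nonneg _)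
    _ ≤ Real.exp (-((n : ℝ) * ε)) * (((n : ℝ) + 1) ^ (Fintype.card X)) :=
        mul_le_mul_of_nonneg_left step3 (Real.exp_nonneg _)
    _ = _ := mul_comm _ _
private lemma emp_eq_typ {X : Type*} [Fintype X] [DecidableEq X] (n : ℕ) (ω : ℕ → X) (a : X) :
    emp n ω a = ((Finset.univ.filter fun k : Fin n => ω (k : ℕ) = a).card : ℝ) / n := by
  unfold emp
  congr 2
  rw [Finset.card_filter, Finset.card_filter]
  exact (Fin.sum_univ_eq_sum_range (fun k => if ω k = a then 1 else 0) n).symm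

theorem kl_empirical_concentration {X : Type*} [Fintype X] [DecidableEq X] [MeasurableSpace X]
    (Q : X → ℝ) (hQ : IsDist Q)
    (μ : Measure (ℕ → X)) (hiid : IsIID μ Q)
    (n : ℕ) (ε : ℝ) (hε : 0 < ε) :
    μ {ω | ε ≤ KL (emp n ω) Q} ≤
      ENNReal.ofReal (((n : ℝ) + 1) ^ (Fintype.card X) * Real.exp (-(n * ε))) := by
  classical
  rcases Nat.eq_zero_or_pos n with hn | hn
  · subst hn
    have hempty : {ω : ℕ → X | ε ≤ KL (emp 0 ω) Q} = ∅ := by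
      ext ω
      simp only [Set.mem_setOf_eq, Set.mem_empty_iff_false, iff_false, not_le]
      have : KL (emp 0 ω) Q = 0 := by
        unfold KL
        refine Finset.sum_eq_zero fun a _ => ?_
        rw [emp_eq_typ]
        simp
      rw [this]
      exact hε
    rw [hempty, measure_empty]
    exact zero_le
  · set S : Finset (Fin n → X) := Finset.univ.filter
      (fun v => ε ≤ KL (fun a => ((Finset.univ.filter fun k => v k = a).card : ℝ) / n) Q)
      with hSdef
    have hsubset : {ω : ℕ → X | ε ≤ KL (emp n ω) Q} ⊆
        ⋃ v ∈ S, {ω : ℕ → X | ∀ k : Fin n, ω (k : ℕ) = v k} := by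
      intro ω hω
      refine Set.mem_iUnion₂.2 ⟨fun k : Fin n => ω (k : ℕ), ?_, fun _ => rfl⟩
      refine Finset.mem_filter.2 ⟨Finset.mem_univ _, ?_⟩
      have hemp : emp n ω = fun a =>
          ((Finset.univ.filter fun k : Fin n => ω (k : ℕ) = a).card : ℝ) / n :=
        funext fun a => emp_eq_typ n ω a
      rw [← hemp]
      exact hω
    have hKLv : ∀ v ∈ S,
        ε ≤ KL (fun a => ((Finset.univ.filter fun k => v k = a).card : ℝ) / n) Q :=
      fun v hv => (Finset.mem_filter.1 hv).2
    calc μ {ω | ε ≤ KL (emp n ω) Q}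
        ≤ μ (⋃ v ∈ S, {ω : ℕ → X | ∀ k : Fin n, ω (k : ℕ) = v k}) := measure_mono hsubset
      _ ≤ ∑ v ∈ S, μ {ω : ℕ → X | ∀ k : Fin n, ω (k : ℕ) = v k} :=
          measure_biUnion_finset_le S _
      _ = ∑ v ∈ S, ENNReal.ofReal (∏ k, Q (v k)) :=
          Finset.sum_congr rfl fun v _ => hiid.2 n v
      _ = ENNReal.ofReal (∑ v ∈ S, ∏ k, Q (v k)) :=
          (ENNReal.ofReal_sum_of_nonneg fun v _ =>
            Finset.prod_nonneg fun k _ => hQ.1 (v k)).symm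
      _ ≤ ENNReal.ofReal (((n : ℝ) + 1) ^ (Fintype.card X) * Real.exp (-(n * ε))) := by
          refine ENNReal.ofReal_le_ofReal ?_
          exact sum_S_le Q hQ.1 hn S hKLv

end

end AHT
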